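/- arXiv:2604.16678 — 2 statements merged into one kernel-verified Lean document; each statement's English description precedes it below -/
import Mathlib

section
/- Let C ∈ R^{d1×d2} and ρ > 0. A pair (F1, F2) ∈ R^{r×d1} × R^{r×d2} maximizes tr(F1 C F2ᵀ) − (ρ/2)‖F1ᵀF2‖_F² if and only if F1ᵀF2 is a best rank-r approximation of (1/ρ)C in Frobenius norm, i.e., F1ᵀF2 = (1/ρ)∑_{i=1}^r σ_i u_i v_iᵀ where σ_i, u_i, v_i are top-r singular values/vectors of C. -/
open Matrix

/-- Squared Frobenius norm of a real matrix. -/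
noncomputable def frobSq {m n : ℕ} (M : Matrix (Fin m) (Fin n) ℝ) : ℝ :=
  Matrix.trace (Mᵀ * M)

/-- Rank factorization: a matrix of rank at most `r` factors through `r`. -/
lemma factor_of_rank_le {r d1 d2 : ℕ} (Z : Matrix (Fin d1) (Fin d2) ℝ) (hZ : Z.rank ≤ r) :
    ∃ (A : Matrix (Fin r) (Fin d1) ℝ) (B : Matrix (Fin r) (Fin d2) ℝ), Z = Aᵀ * B := by
  set k := Z.rank with hk
  set R := LinearMap.range Z.mulVecLin
  have hfin : Module.finrank ℝ R = k := rfl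
  let bR : Module.Basis (Fin k) ℝ R := (Module.finBasis ℝ R).reindex (finCongr hfin)
  let eqv : R ≃ₗ[ℝ] (Fin k → ℝ) := bR.equivFun
  let e : Matrix (Fin r) (Fin k) ℝ := Matrix.of fun i j => if (i : ℕ) = (j : ℕ) then 1 else 0
  have hpe : eᵀ * e = 1 := by
    ext i j
    simp only [Matrix.mul_apply, Matrix.transpose_apply, Matrix.one_apply, e, Matrix.of_apply]
    rw [Finset.sum_eq_single (Fin.castLE hZ i)]
    · simp [Fin.ext_iff]
    · intro b _ hb
      simp only [ite_mul, one_mul, zero_mul, ite_eq_right_iff]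
      intro h1 h2
      exact absurd (Fin.ext (by simp [Fin.castLE] at h1 ⊢; omega : (b:ℕ) = (Fin.castLE hZ i : ℕ))) hb
    · simp
  let g : (Fin d2 → ℝ) →ₗ[ℝ] (Fin r → ℝ) :=
    Matrix.toLin' e ∘ₗ eqv.toLinearMap ∘ₗ Z.mulVecLin.rangeRestrict
  let h : (Fin r → ℝ) →ₗ[ℝ] (Fin d1 → ℝ) :=
    R.subtype ∘ₗ eqv.symm.toLinearMap ∘ₗ Matrix.toLin' eᵀ
  have hcomp : h ∘ₗ g = Z.mulVecLin := by
    apply LinearMap.ext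
    intro x
    simp only [h, g, LinearMap.comp_apply, Matrix.toLin'_apply']
    rw [← LinearMap.comp_apply (eᵀ.mulVecLin), ← Matrix.mulVecLin_mul, hpe, Matrix.mulVecLin_one]
    simp
  refine ⟨(LinearMap.toMatrix' h)ᵀ, LinearMap.toMatrix' g, ?_⟩
  rw [transpose_transpose]
  have : Z = LinearMap.toMatrix' Z.mulVecLin := by
    rw [← Matrix.toLin'_apply', LinearMap.toMatrix'_toLin']
  rw [this, ← hcomp, LinearMap.toMatrix'_comp]

lemma trace_id {r d1 d2 : ℕ} (C : Matrix (Fin d1) (Fin d2) ℝ)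
    (G1 : Matrix (Fin r) (Fin d1) ℝ) (G2 : Matrix (Fin r) (Fin d2) ℝ) :
    Matrix.trace (G1 * C * G2ᵀ) = Matrix.trace ((G1ᵀ * G2)ᵀ * C) := by
  rw [transpose_mul, transpose_transpose, Matrix.trace_mul_cycle]

lemma frobSq_expand {d1 d2 : ℕ} (C M : Matrix (Fin d1) (Fin d2) ℝ) (ρ : ℝ) (hρ : ρ ≠ 0) :
    frobSq ((1 / ρ) • C - M)
      = (1 / ρ ^ 2) * frobSq C - (2 / ρ) * Matrix.trace (Mᵀ * C) + frobSq M := by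
  have hCM : Matrix.trace (Cᵀ * M) = Matrix.trace (Mᵀ * C) := by
    rw [← Matrix.trace_transpose (Cᵀ * M), transpose_mul, transpose_transpose]
  simp only [frobSq, transpose_sub, transpose_smul, Matrix.sub_mul, Matrix.mul_sub,
    Matrix.smul_mul, Matrix.mul_smul, Matrix.trace_sub, Matrix.trace_smul, smul_eq_mul,
    smul_smul, hCM]
  field_simp
  ring

lemma obj_id {d1 d2 : ℕ} (C M : Matrix (Fin d1) (Fin d2) ℝ) (ρ : ℝ) (hρ : ρ ≠ 0) :
    Matrix.trace (Mᵀ * C) - (ρ / 2) * frobSq M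
      = (1 / (2 * ρ)) * frobSq C - (ρ / 2) * frobSq ((1 / ρ) • C - M) := by
  rw [frobSq_expand C M ρ hρ]
  field_simp
  ring

/-- A pair (F₁, F₂) maximizes tr(F₁ C F₂ᵀ) − (ρ/2)‖F₁ᵀF₂‖_F² if and only if
F₁ᵀF₂ is a best rank-r approximation of (1/ρ)C in the Frobenius norm. -/
theorem stmt1 {r d1 d2 : ℕ} (C : Matrix (Fin d1) (Fin d2) ℝ) (ρ : ℝ) (hρ : 0 < ρ)
    (F1 : Matrix (Fin r) (Fin d1) ℝ) (F2 : Matrix (Fin r) (Fin d2) ℝ) :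
    (∀ (G1 : Matrix (Fin r) (Fin d1) ℝ) (G2 : Matrix (Fin r) (Fin d2) ℝ),
        Matrix.trace (G1 * C * G2ᵀ) - (ρ / 2) * frobSq (G1ᵀ * G2)
          ≤ Matrix.trace (F1 * C * F2ᵀ) - (ρ / 2) * frobSq (F1ᵀ * F2))
      ↔ ((F1ᵀ * F2).rank ≤ r ∧
          ∀ Z : Matrix (Fin d1) (Fin d2) ℝ, Z.rank ≤ r →
            frobSq ((1 / ρ) • C - F1ᵀ * F2) ≤ frobSq ((1 / ρ) • C - Z)) := by
  have hρ' : ρ ≠ 0 := ne_of_gt hρ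
  have hhalf : 0 < ρ / 2 := by positivity
  constructor
  · intro hmax
    refine ⟨(Matrix.rank_mul_le_left F1ᵀ F2).trans (Matrix.rank_le_width F1ᵀ), ?_⟩
    intro Z hZ
    obtain ⟨A, B, rfl⟩ := factor_of_rank_le Z hZ
    have h := hmax A B
    rw [trace_id C A B, trace_id C F1 F2, obj_id C (Aᵀ * B) ρ hρ',
      obj_id C (F1ᵀ * F2) ρ hρ'] at h
    have := sub_le_sub_left h ((1 / (2 * ρ)) * frobSq C)
    have h2 : (ρ / 2) * frobSq ((1/ρ) • C - F1ᵀ * F2) ≤ (ρ / 2) * frobSq ((1/ρ) • C - Aᵀ * B) := by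
      linarith
    exact le_of_mul_le_mul_left h2 hhalf
  · intro ⟨_, hbest⟩ G1 G2
    have hrk : (G1ᵀ * G2).rank ≤ r :=
      (Matrix.rank_mul_le_left G1ᵀ G2).trans (Matrix.rank_le_width G1ᵀ)
    have h := hbest (G1ᵀ * G2) hrk
    rw [trace_id C G1 G2, trace_id C F1 F2, obj_id C (G1ᵀ * G2) ρ hρ',
      obj_id C (F1ᵀ * F2) ρ hρ']
    have := mul_le_mul_of_nonneg_left h (le_of_lt hhalf)
    linarith
end

section
/- Let M ∈ R^{m×n} and r ≤ min(m, n). Among all matrices of rank at most r, the Frobenius distance to M is minimized by the truncated SVD M_r = ∑_{i=1}^r σ_i u_i v_iᵀ, and the minimal squared distance equals ∑_{i=r+1}^{min(m,n)} σ_i². -/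
open Matrix

section aux

lemma frobSq_eq_sum {m n : ℕ} (A : Matrix (Fin m) (Fin n) ℝ) :
    frobSq A = ∑ j : Fin n, ∑ i : Fin m, A i j ^ 2 := by
  unfold frobSq
  rw [Matrix.trace]
  simp [Matrix.mul_apply, Matrix.diag, sq]

lemma frobSq_nonneg {m n : ℕ} (A : Matrix (Fin m) (Fin n) ℝ) : 0 ≤ frobSq A := by
  rw [frobSq_eq_sum]
  exact Finset.sum_nonneg fun j _ => Finset.sum_nonneg fun i _ => sq_nonneg _

lemma frobSq_conj {m n : ℕ} (U : Matrix (Fin m) (Fin m) ℝ) (V : Matrix (Fin n) (Fin n) ℝ)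
    (hU : Uᵀ * U = 1) (hV : Vᵀ * V = 1) (A : Matrix (Fin m) (Fin n) ℝ) :
    frobSq (U * A * Vᵀ) = frobSq A := by
  unfold frobSq
  have cancelU : ∀ X : Matrix (Fin m) (Fin n) ℝ, Uᵀ * (U * X) = X := fun X => by
    rw [← Matrix.mul_assoc, hU, Matrix.one_mul]
  have h1 : (U * A * Vᵀ)ᵀ * (U * A * Vᵀ) = V * (Aᵀ * (A * Vᵀ)) := by
    simp only [Matrix.transpose_mul, Matrix.transpose_transpose, Matrix.mul_assoc, cancelU]
  rw [h1, Matrix.trace_mul_comm]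
  simp only [Matrix.mul_assoc]
  rw [hV, Matrix.mul_one]

lemma sum_fin_diag {m : ℕ} (c : ℕ) (f : Fin m → ℝ) :
    ∑ i : Fin m, (if (i : ℕ) = c then f i else 0) = if h : c < m then f ⟨c, h⟩ else 0 := by
  split
  · next h =>
    rw [Finset.sum_eq_single (⟨c, h⟩ : Fin m)]
    · simp
    · intro i _ hi
      rw [if_neg]
      intro hic
      exact hi (Fin.ext hic)
    · simp
  · next h =>
    apply Finset.sum_eq_zero
    intro i _
    rw [if_neg]
    omega

lemma filter_range_min {m n : ℕ} :
    (Finset.range n).filter (fun k => k < m) = Finset.range (min m n) := by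
  ext k
  simp [Nat.lt_min, and_comm]

lemma frobSq_diag {m n : ℕ} (g : ℕ → ℝ) :
    frobSq (Matrix.of fun (i : Fin m) (j : Fin n) => if (i : ℕ) = (j : ℕ) then g i else 0)
      = ∑ k ∈ Finset.range (min m n), g k ^ 2 := by
  rw [frobSq_eq_sum]
  have h1 : ∀ j : Fin n,
      (∑ i : Fin m, (Matrix.of fun (i : Fin m) (j : Fin n) =>
          if (i : ℕ) = (j : ℕ) then g i else 0) i j ^ 2)
        = if (j : ℕ) < m then g (j : ℕ) ^ 2 else 0 := by
    intro j
    calc (∑ i : Fin m, (Matrix.of fun (i : Fin m) (j : Fin n) =>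
          if (i : ℕ) = (j : ℕ) then g i else 0) i j ^ 2)
        = ∑ i : Fin m, (if (i : ℕ) = (j : ℕ) then g (i : ℕ) ^ 2 else 0) := by
          apply Finset.sum_congr rfl
          intro i _
          simp only [Matrix.of_apply]
          split <;> simp
      _ = if h : (j : ℕ) < m then g ((⟨(j : ℕ), h⟩ : Fin m) : ℕ) ^ 2 else 0 :=
          sum_fin_diag (j : ℕ) (fun i => g (i : ℕ) ^ 2)
      _ = if (j : ℕ) < m then g (j : ℕ) ^ 2 else 0 := by
          split <;> rfl
  rw [Finset.sum_congr rfl fun j _ => h1 j,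
    Fin.sum_univ_eq_sum_range (fun k => if k < m then g k ^ 2 else 0) n,
    ← Finset.sum_filter, filter_range_min]

lemma scalar_maj {N r : ℕ} (hr : r ≤ N) (f p : ℕ → ℝ)
    (hf0 : ∀ k, k < N → 0 ≤ f k) (hfdec : ∀ i j : ℕ, i ≤ j → j < N → f j ≤ f i)
    (hp0 : ∀ k, 0 ≤ p k) (hp1 : ∀ k, p k ≤ 1)
    (hps : ∑ k ∈ Finset.range N, p k ≤ (r : ℝ)) :
    ∑ k ∈ Finset.range N, f k ^ 2 * p k ≤ ∑ k ∈ Finset.range r, f k ^ 2 := by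
  rcases eq_or_lt_of_le hr with h | h
  · subst h
    apply Finset.sum_le_sum
    intro k _
    nlinarith [sq_nonneg (f k), hp0 k, hp1 k]
  · set c := f r ^ 2 with hc
    have hc0 : (0 : ℝ) ≤ c := sq_nonneg _
    have hsplit : ∀ q : ℕ → ℝ, ∑ k ∈ Finset.range N, q k
        = ∑ k ∈ Finset.range r, q k + ∑ k ∈ Finset.Ico r N, q k := by
      intro q
      have h0 := Finset.sum_Ico_consecutive q (Nat.zero_le r) hr
      simp only [Finset.range_eq_Ico]
      linarith
    have h1 : ∑ k ∈ Finset.Ico r N, f k ^ 2 * p k ≤ c * ∑ k ∈ Finset.Ico r N, p k := by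
      rw [Finset.mul_sum]
      apply Finset.sum_le_sum
      intro k hk
      rw [Finset.mem_Ico] at hk
      have hfk : f k ≤ f r := hfdec r k hk.1 hk.2
      have hfk0 : 0 ≤ f k := hf0 k hk.2
      have hfr0 : 0 ≤ f r := hf0 r h
      have hsq : f k ^ 2 ≤ c := by nlinarith
      nlinarith [hp0 k]
    have h2 : ∑ k ∈ Finset.Ico r N, p k ≤ (r : ℝ) - ∑ k ∈ Finset.range r, p k := by
      have := hsplit p
      linarith
    have h3 : ∑ k ∈ Finset.range r, (f k ^ 2 * p k + c * (1 - p k))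
        = ∑ k ∈ Finset.range r, f k ^ 2 * p k + c * ((r : ℝ) - ∑ k ∈ Finset.range r, p k) := by
      rw [Finset.sum_add_distrib]
      congr 1
      rw [← Finset.mul_sum, Finset.sum_sub_distrib, Finset.sum_const, Finset.card_range,
        nsmul_eq_mul, mul_one]
    calc ∑ k ∈ Finset.range N, f k ^ 2 * p k
        = ∑ k ∈ Finset.range r, f k ^ 2 * p k + ∑ k ∈ Finset.Ico r N, f k ^ 2 * p k := hsplit _
      _ ≤ ∑ k ∈ Finset.range r, f k ^ 2 * p k
            + c * ((r : ℝ) - ∑ k ∈ Finset.range r, p k) := by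
          have := h1.trans (mul_le_mul_of_nonneg_left h2 hc0)
          linarith
      _ = ∑ k ∈ Finset.range r, (f k ^ 2 * p k + c * (1 - p k)) := h3.symm
      _ ≤ ∑ k ∈ Finset.range r, f k ^ 2 := by
          apply Finset.sum_le_sum
          intro k hk
          rw [Finset.mem_range] at hk
          have h4 : f r ≤ f k := hfdec k r (le_of_lt hk) h
          have h5 : 0 ≤ f r := hf0 r h
          have h6 : 0 ≤ f k := hf0 k (hk.trans h)
          have h7 : c ≤ f k ^ 2 := by nlinarith
          nlinarith [hp0 k, hp1 k]

lemma exists_proj {m n r : ℕ} (Z : Matrix (Fin m) (Fin n) ℝ) (hZ : Z.rank ≤ r) :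
    ∃ P : Matrix (Fin m) (Fin m) ℝ,
      Pᵀ = P ∧ P * P = P ∧ P.trace ≤ (r : ℝ) ∧ P * Z = Z := by
  classical
  set E := EuclideanSpace ℝ (Fin m) with hE
  let e : E ≃ₗ[ℝ] (Fin m → ℝ) := WithLp.linearEquiv 2 ℝ (Fin m → ℝ)
  let W : Submodule ℝ E := (LinearMap.range Z.mulVecLin).map e.symm.toLinearMap
  have hWr : Module.finrank ℝ W ≤ r := by
    rw [LinearEquiv.finrank_map_eq e.symm (LinearMap.range Z.mulVecLin)]
    exact hZ
  let s := Module.finrank ℝ W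
  let b := stdOrthonormalBasis ℝ W
  let Q : Matrix (Fin m) (Fin s) ℝ := Matrix.of fun i k => ((b k : E) : Fin m → ℝ) i
  have hQQ : Qᵀ * Q = 1 := by
    ext k l
    have horth := (b.orthonormal)
    rw [orthonormal_iff_ite] at horth
    have h2 := horth k l
    rw [Submodule.coe_inner, PiLp.inner_apply] at h2
    simp only [RCLike.inner_apply, conj_trivial] at h2
    simp only [Matrix.mul_apply, Matrix.transpose_apply, Matrix.of_apply, Matrix.one_apply]
    rw [← h2]
    exact Finset.sum_congr rfl fun _ _ => mul_comm _ _
  let P := Q * Qᵀ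
  have hPT : Pᵀ = P := by
    simp only [P, Matrix.transpose_mul, Matrix.transpose_transpose]
  have hPP : P * P = P := by
    calc Q * Qᵀ * (Q * Qᵀ) = Q * ((Qᵀ * Q) * Qᵀ) := by simp only [Matrix.mul_assoc]
      _ = Q * Qᵀ := by rw [hQQ, Matrix.one_mul]
  have htr : P.trace ≤ (r : ℝ) := by
    have : P.trace = (s : ℝ) := by
      rw [Matrix.trace_mul_comm, hQQ, Matrix.trace_one]
      simp
    rw [this]
    exact_mod_cast hWr
  have hfix : ∀ x : E, x ∈ W → ∀ i : Fin m, (∑ i', P i i' * (x : Fin m → ℝ) i') = x i := by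
    intro x hx i
    have hrepr := b.sum_repr' (⟨x, hx⟩ : W)
    let φ : E →ₗ[ℝ] ℝ := (LinearMap.proj i).comp e.toLinearMap
    have hφ : ∀ y : E, φ y = y i := fun y => rfl
    have h2 := congrArg (φ.comp W.subtype) hrepr
    rw [map_sum] at h2
    simp only [LinearMap.comp_apply, Submodule.coe_subtype, Submodule.coe_smul,
      _root_.map_smul, smul_eq_mul] at h2
    -- h2 : ∑ k, ⟪b k, ⟨x,hx⟩⟫ * φ (b k) = φ x
    have hinner : ∀ k, (inner ℝ (b k) (⟨x, hx⟩ : W) : ℝ)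
        = ∑ i', Q i' k * x i' := by
      intro k
      rw [Submodule.coe_inner, PiLp.inner_apply]
      simp only [RCLike.inner_apply, conj_trivial]
      exact Finset.sum_congr rfl fun _ _ => mul_comm _ _
    calc (∑ i', P i i' * x i')
        = ∑ i', (∑ k, Q i k * Q i' k) * x i' := by
          apply Finset.sum_congr rfl
          intro i' _
          congr 1
      _ = ∑ i', ∑ k, Q i k * Q i' k * x i' := by
          apply Finset.sum_congr rfl
          intro i' _
          rw [Finset.sum_mul]
      _ = ∑ k, ∑ i', Q i k * Q i' k * x i' := Finset.sum_comm
      _ = ∑ k, (inner ℝ (b k) (⟨x, hx⟩ : W) : ℝ) * φ (b k : E) := by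
          apply Finset.sum_congr rfl
          intro k _
          rw [hinner k, hφ ((b k : W) : E), Finset.sum_mul]
          apply Finset.sum_congr rfl
          intro i' _
          show Q i k * Q i' k * x i' = Q i' k * x i' * Q i k
          ring
      _ = φ x := h2
      _ = x i := hφ x
  refine ⟨P, hPT, hPP, htr, ?_⟩
  ext i j
  have hcol : (e.symm (fun i' => Z i' j) : E) ∈ W := by
    refine ⟨fun i' => Z i' j, ?_, rfl⟩
    exact ⟨Pi.single j 1, by rw [Matrix.mulVecLin_apply, Matrix.mulVec_single_one]; rfl⟩
  have h3 := hfix _ hcol i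
  simp only [Matrix.mul_apply]
  calc (∑ i', P i i' * Z i' j) = (e.symm (fun i' => Z i' j) : E) i := by
        rw [← h3]
        rfl
    _ = Z i j := rfl

lemma key_diag {m n r : ℕ} (hr : r ≤ min m n) (σ : ℕ → ℝ)
    (hσ0 : ∀ k, k < min m n → 0 ≤ σ k)
    (hσdec : ∀ i j : ℕ, i ≤ j → j < min m n → σ j ≤ σ i)
    (Z : Matrix (Fin m) (Fin n) ℝ) (hZ : Z.rank ≤ r) :
    ∑ k ∈ Finset.Ico r (min m n), σ k ^ 2 ≤
      frobSq ((Matrix.of fun (i : Fin m) (j : Fin n) =>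
        if (i : ℕ) = (j : ℕ) then σ (i : ℕ) else 0) - Z) := by
  classical
  obtain ⟨P, hPT, hPP, htr, hPZ⟩ := exists_proj Z hZ
  set D : Matrix (Fin m) (Fin n) ℝ :=
    Matrix.of fun (i : Fin m) (j : Fin n) => if (i : ℕ) = (j : ℕ) then σ (i : ℕ) else 0 with hD
  -- orthogonal decomposition
  have hdecomp : D - Z = (1 - P) * D + (P * D - Z) := by
    rw [Matrix.sub_mul, Matrix.one_mul, sub_add_sub_cancel]
  have hPsym : ∀ a b, P a b = P b a := by
    intro a b
    conv_lhs => rw [← hPT]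
    rfl
  have horth : ((1 - P) * D)ᵀ * (P * D - Z) = 0 := by
    have h1 : (1 - P)ᵀ = 1 - P := by
      rw [Matrix.transpose_sub, Matrix.transpose_one, hPT]
    have h2 : (1 - P) * (P * D - Z) = 0 := by
      have e1 : (1 - P) * (P * D) = 0 := by
        rw [Matrix.sub_mul, Matrix.one_mul, ← Matrix.mul_assoc, hPP, sub_self]
      have e2 : (1 - P) * Z = 0 := by
        rw [Matrix.sub_mul, Matrix.one_mul, hPZ, sub_self]
      rw [Matrix.mul_sub, e1, e2, sub_self]
    rw [Matrix.transpose_mul, h1, Matrix.mul_assoc, h2, Matrix.mul_zero]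
  have hsum : frobSq (D - Z) = frobSq ((1 - P) * D) + frobSq (P * D - Z) := by
    unfold frobSq
    rw [hdecomp]
    rw [Matrix.transpose_add, Matrix.add_mul, Matrix.mul_add, Matrix.mul_add,
      Matrix.trace_add, Matrix.trace_add, Matrix.trace_add]
    have hz2 : ((P * D - Z)ᵀ * ((1 - P) * D)) = 0 := by
      have : ((P * D - Z)ᵀ * ((1 - P) * D)) = (((1 - P) * D)ᵀ * (P * D - Z))ᵀ := by
        rw [Matrix.transpose_mul, Matrix.transpose_transpose]
      rw [this, horth, Matrix.transpose_zero]
    rw [horth, hz2, Matrix.trace_zero]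
    ring
  have hge : frobSq ((1 - P) * D) ≤ frobSq (D - Z) := by
    rw [hsum]
    linarith [frobSq_nonneg (P * D - Z)]
  -- frobSq ((1-P) D) = frobSq D - trace (Dᵀ P D)
  have hfp : frobSq ((1 - P) * D) = frobSq D - Matrix.trace (Dᵀ * (P * D)) := by
    unfold frobSq
    have h1 : ((1 - P) * D)ᵀ * ((1 - P) * D) = Dᵀ * D - Dᵀ * (P * D) := by
      have h2 : (1 - P)ᵀ = 1 - P := by
        rw [Matrix.transpose_sub, Matrix.transpose_one, hPT]
      have h3 : (1 - P) * ((1 - P) * D) = D - P * D := by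
        have e1 : P * (P * D) = P * D := by rw [← Matrix.mul_assoc, hPP]
        rw [Matrix.sub_mul, Matrix.one_mul, Matrix.sub_mul, Matrix.one_mul,
          Matrix.mul_sub, e1]
        abel
      rw [Matrix.transpose_mul, h2, Matrix.mul_assoc, h3, Matrix.mul_sub]
    rw [h1, Matrix.trace_sub]
  -- diag entries of P
  let p : ℕ → ℝ := fun k => if h : k < m then P ⟨k, h⟩ ⟨k, h⟩ else 0
  have hdiag : ∀ i : Fin m, P i i = ∑ k : Fin m, P i k ^ 2 := by
    intro i
    have : P i i = (P * P) i i := by rw [hPP]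
    rw [this, Matrix.mul_apply]
    apply Finset.sum_congr rfl
    intro k _
    rw [hPsym k i, sq]
  have hp0 : ∀ k, 0 ≤ p k := by
    intro k
    simp only [p]
    split
    · next h =>
      rw [hdiag ⟨k, h⟩]
      exact Finset.sum_nonneg fun _ _ => sq_nonneg _
    · exact le_refl 0
  have hp1 : ∀ k, p k ≤ 1 := by
    intro k
    simp only [p]
    split
    · next h =>
      have h1 : P ⟨k, h⟩ ⟨k, h⟩ ^ 2 ≤ P ⟨k, h⟩ ⟨k, h⟩ := by
        conv_rhs => rw [hdiag ⟨k, h⟩]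
        exact Finset.single_le_sum (f := fun l => P ⟨k, h⟩ l ^ 2)
          (fun l _ => sq_nonneg _) (Finset.mem_univ (⟨k, h⟩ : Fin m))
      nlinarith [h1, sq_nonneg (P ⟨k, h⟩ ⟨k, h⟩ - 1)]
    · exact zero_le_one
  have hptr : ∑ k ∈ Finset.range (min m n), p k ≤ (r : ℝ) := by
    have e1 : ∑ k ∈ Finset.range m, p k = P.trace := by
      rw [← Fin.sum_univ_eq_sum_range p m]
      apply Finset.sum_congr rfl
      intro i _
      simp only [p, i.isLt, dif_pos, Fin.eta]
      rfl
    have e2 : ∑ k ∈ Finset.range (min m n), p k ≤ ∑ k ∈ Finset.range m, p k := by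
      apply Finset.sum_le_sum_of_subset_of_nonneg
      · exact Finset.range_subset_range.2 (min_le_left m n)
      · intro k _ _
        exact hp0 k
    linarith
  -- trace (Dᵀ (P D)) = ∑ σ² p
  have htrace : Matrix.trace (Dᵀ * (P * D)) = ∑ k ∈ Finset.range (min m n), σ k ^ 2 * p k := by
    have hPD : ∀ (i : Fin m) (j : Fin n),
        (P * D) i j = if h : (j : ℕ) < m then P i ⟨(j : ℕ), h⟩ * σ (j : ℕ) else 0 := by
      intro i j
      rw [Matrix.mul_apply]
      have : ∀ i' : Fin m, P i i' * D i' j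
          = if (i' : ℕ) = (j : ℕ) then P i i' * σ (i' : ℕ) else 0 := by
        intro i'
        simp only [hD, Matrix.of_apply, mul_ite, mul_zero]
      rw [Finset.sum_congr rfl fun i' _ => this i',
        sum_fin_diag (j : ℕ) (fun i' => P i i' * σ (i' : ℕ))]
    have hinner : ∀ j : Fin n,
        (∑ i : Fin m, D i j * (P * D) i j)
          = if (j : ℕ) < m then σ (j : ℕ) ^ 2 * p (j : ℕ) else 0 := by
      intro j
      have : ∀ i : Fin m, D i j * (P * D) i j
          = if (i : ℕ) = (j : ℕ) then σ (i : ℕ) * (P * D) i j else 0 := by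
        intro i
        simp only [hD, Matrix.of_apply, ite_mul, zero_mul]
      rw [Finset.sum_congr rfl fun i _ => this i,
        sum_fin_diag (j : ℕ) (fun i => σ (i : ℕ) * (P * D) i j)]
      split
      · next h =>
        rw [hPD ⟨(j : ℕ), h⟩ j]
        simp only [p, h, dif_pos]
        ring_nf
      · rfl
    have : Matrix.trace (Dᵀ * (P * D)) = ∑ j : Fin n, ∑ i : Fin m, D i j * (P * D) i j := by
      rw [Matrix.trace]
      apply Finset.sum_congr rfl
      intro j _
      rw [Matrix.diag, Matrix.mul_apply]
      apply Finset.sum_congr rfl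
      intro i _
      rw [Matrix.transpose_apply]
    rw [this, Finset.sum_congr rfl fun j _ => hinner j,
      Fin.sum_univ_eq_sum_range (fun k => if k < m then σ k ^ 2 * p k else 0) n,
      ← Finset.sum_filter, filter_range_min]
  have hmaj : ∑ k ∈ Finset.range (min m n), σ k ^ 2 * p k
      ≤ ∑ k ∈ Finset.range r, σ k ^ 2 :=
    scalar_maj hr σ p hσ0 hσdec hp0 hp1 hptr
  have hfd : frobSq D = ∑ k ∈ Finset.range (min m n), σ k ^ 2 := frobSq_diag σ
  have hIco : ∑ k ∈ Finset.Ico r (min m n), σ k ^ 2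
      = ∑ k ∈ Finset.range (min m n), σ k ^ 2 - ∑ k ∈ Finset.range r, σ k ^ 2 := by
    have h0 := Finset.sum_Ico_consecutive (fun k => σ k ^ 2) (Nat.zero_le r) hr
    simp only [Finset.range_eq_Ico]
    linarith
  rw [hIco]
  have := hfp
  rw [htrace, hfd] at this
  linarith [hge]

end aux

/-- Eckart–Young–Mirsky (Frobenius norm): if M = UΣVᵀ is an SVD with ordered
nonnegative singular values σ₁ ≥ σ₂ ≥ …, then among all matrices of rank at
most r, the truncation M_r minimizes the Frobenius distance to M, and the
minimal squared distance equals ∑_{i=r+1}^{min(m,n)} σ_i². -/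
theorem stmt18 {m n r : ℕ} (hr : r ≤ min m n)
    (M : Matrix (Fin m) (Fin n) ℝ)
    (U : Matrix (Fin m) (Fin m) ℝ) (V : Matrix (Fin n) (Fin n) ℝ)
    (σ : ℕ → ℝ)
    (hU : Uᵀ * U = 1) (hV : Vᵀ * V = 1)
    (hσ0 : ∀ k, k < min m n → 0 ≤ σ k)
    (hσdec : ∀ i j : ℕ, i ≤ j → j < min m n → σ j ≤ σ i)
    (hM : M = U * (Matrix.of fun (i : Fin m) (j : Fin n) =>
        if (i : ℕ) = (j : ℕ) then σ (i : ℕ) else 0) * Vᵀ) :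
    letI Mr : Matrix (Fin m) (Fin n) ℝ :=
      U * (Matrix.of fun (i : Fin m) (j : Fin n) =>
        if (i : ℕ) = (j : ℕ) ∧ (i : ℕ) < r then σ (i : ℕ) else 0) * Vᵀ
    Mr.rank ≤ r ∧
      (∀ Z : Matrix (Fin m) (Fin n) ℝ, Z.rank ≤ r →
        frobSq (M - Mr) ≤ frobSq (M - Z)) ∧
      frobSq (M - Mr) = ∑ k ∈ Finset.Ico r (min m n), (σ k) ^ 2 := by
  classical
  set D : Matrix (Fin m) (Fin n) ℝ :=
    Matrix.of fun (i : Fin m) (j : Fin n) => if (i : ℕ) = (j : ℕ) then σ (i : ℕ) else 0 with hD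
  set Dr : Matrix (Fin m) (Fin n) ℝ :=
    Matrix.of fun (i : Fin m) (j : Fin n) =>
      if (i : ℕ) = (j : ℕ) ∧ (i : ℕ) < r then σ (i : ℕ) else 0 with hDr
  have hUU : U * Uᵀ = 1 := mul_eq_one_comm.mp hU
  have hVV : V * Vᵀ = 1 := mul_eq_one_comm.mp hV
  -- Part 3: value of frobSq (M - Mr)
  have hMMr : M - U * Dr * Vᵀ = U * (D - Dr) * Vᵀ := by
    rw [hM, Matrix.mul_sub, Matrix.sub_mul]
  have hDDr : D - Dr = Matrix.of fun (i : Fin m) (j : Fin n) =>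
      if (i : ℕ) = (j : ℕ) then (if (i : ℕ) < r then 0 else σ (i : ℕ)) else 0 := by
    ext i j
    simp only [hD, hDr, Matrix.sub_apply, Matrix.of_apply]
    by_cases h1 : (i : ℕ) = (j : ℕ)
    · simp only [h1]
      by_cases h2 : (j : ℕ) < r <;> simp [h2]
    · simp [h1]
  have h3val : frobSq (M - U * Dr * Vᵀ) = ∑ k ∈ Finset.Ico r (min m n), (σ k) ^ 2 := by
    rw [hMMr, frobSq_conj U V hU hV, hDDr,
      frobSq_diag (fun k => if k < r then 0 else σ k)]
    have : ∀ k, (if k < r then (0 : ℝ) else σ k) ^ 2 = if k < r then 0 else σ k ^ 2 := by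
      intro k
      split <;> simp
    rw [Finset.sum_congr rfl fun k _ => this k]
    have h0 := Finset.sum_Ico_consecutive (fun k => if k < r then (0 : ℝ) else σ k ^ 2)
      (Nat.zero_le r) hr
    have e1 : ∑ k ∈ Finset.Ico 0 r, (if k < r then (0 : ℝ) else σ k ^ 2) = 0 := by
      apply Finset.sum_eq_zero
      intro k hk
      rw [Finset.mem_Ico] at hk
      rw [if_pos hk.2]
    have e2 : ∑ k ∈ Finset.Ico r (min m n), (if k < r then (0 : ℝ) else σ k ^ 2)
        = ∑ k ∈ Finset.Ico r (min m n), σ k ^ 2 := by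
      apply Finset.sum_congr rfl
      intro k hk
      rw [Finset.mem_Ico] at hk
      rw [if_neg (not_lt.2 hk.1)]
    simp only [Finset.range_eq_Ico]
    rw [e2] at h0
    linarith
  refine ⟨?_, ?_, h3val⟩
  · -- rank bound
    let A : Matrix (Fin m) (Fin r) ℝ :=
      Matrix.of fun i k => if (i : ℕ) = (k : ℕ) then σ (i : ℕ) else 0
    let B : Matrix (Fin r) (Fin n) ℝ :=
      Matrix.of fun k j => if (k : ℕ) = (j : ℕ) then (1 : ℝ) else 0
    have hAB : A * B = Dr := by
      ext i j
      rw [Matrix.mul_apply]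
      have : ∀ k : Fin r, A i k * B k j
          = if (k : ℕ) = (i : ℕ) then (if (i : ℕ) = (j : ℕ) then σ (i : ℕ) else 0) else 0 := by
        intro k
        simp only [A, B, Matrix.of_apply]
        by_cases h1 : (i : ℕ) = (k : ℕ)
        · by_cases h2 : (k : ℕ) = (j : ℕ)
          · rw [if_pos h1, if_pos h2, if_pos h1.symm, if_pos (h1.trans h2), mul_one]
          · have hij : ¬((i : ℕ) = (j : ℕ)) := fun hc => h2 (h1.symm.trans hc)
            rw [if_pos h1, if_neg h2, if_pos h1.symm, if_neg hij, mul_zero]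
        · have hki : ¬((k : ℕ) = (i : ℕ)) := fun hc => h1 hc.symm
          rw [if_neg h1, if_neg hki, zero_mul]
      rw [Finset.sum_congr rfl fun k _ => this k,
        sum_fin_diag (m := r) (i : ℕ)
          (fun _ => if (i : ℕ) = (j : ℕ) then σ (i : ℕ) else 0)]
      simp only [hDr, Matrix.of_apply]
      split
      · next h =>
        split
        · next h2 => rw [if_pos ⟨h2, h⟩]
        · next h2 => rw [if_neg (fun hc => h2 hc.1)]
      · next h =>
        rw [if_neg (fun hc => h hc.2)]
    have : U * Dr * Vᵀ = (U * A) * (B * Vᵀ) := by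
      rw [← hAB]
      simp only [Matrix.mul_assoc]
    rw [this]
    calc ((U * A) * (B * Vᵀ)).rank ≤ (B * Vᵀ).rank := Matrix.rank_mul_le_right _ _
      _ ≤ r := by
        have := Matrix.rank_le_card_height (B * Vᵀ)
        simpa using this
  · -- optimality
    intro Z hZ
    have hMZ : M - Z = U * (D - Uᵀ * Z * V) * Vᵀ := by
      have cancel : ∀ X : Matrix (Fin m) (Fin n) ℝ, U * (Uᵀ * X) = X := by
        intro X
        rw [← Matrix.mul_assoc, hUU, Matrix.one_mul]
      rw [hM, Matrix.mul_sub, Matrix.sub_mul]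
      congr 1
      symm
      calc U * (Uᵀ * Z * V) * Vᵀ = U * (Uᵀ * (Z * (V * Vᵀ))) := by
            simp only [Matrix.mul_assoc]
        _ = Z := by rw [hVV, Matrix.mul_one, cancel]
    have hZ' : (Uᵀ * Z * V).rank ≤ r := by
      calc (Uᵀ * Z * V).rank ≤ (Uᵀ * Z).rank := Matrix.rank_mul_le_left _ _
        _ ≤ Z.rank := Matrix.rank_mul_le_right _ _
        _ ≤ r := hZ
    rw [h3val, hMZ, frobSq_conj U V hU hV]
    exact key_diag hr σ hσ0 hσdec (Uᵀ * Z * V) hZ'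
end
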